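/- For n ≥ 1, 0 ≤ s ≤ n-1, and nonnegative integer m, define A_{ij} = (1/2)·binomial(n+m-i, m+i-j) + binomial(n+m-i, m+i-1-j) for i ≠ s+1 and A_{s+1,j} = binomial(n+m-s, m+s-j). Then det_{1≤i,j≤n}(A_{ij}) = [(n+m-s)(s+m)/((2n-2s)·∏_{i=1}^{n}(2n+1-2i)!)] · det_{1≤i,j≤n}(B_{ij}), where B_{ij} = (n+2+j-2i)_{n-j}(i+m+1-j)_{j-1}(m+(n+1-j)/2) for i ≠ s+1 and B_{s+1,j} = (n+1+j-2s)_{n-j}(s+m+1-j)_{j-1}. -/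

import Mathlib

/-- Binomial coefficient `binomial a b` for integer lower index, zero when
`b < 0` (and, via `Nat.choose`, when `b > a`). -/
def cb (a : ℕ) (b : ℤ) : ℚ := if 0 ≤ b then (Nat.choose a b.toNat : ℚ) else 0

/-- The rising factorial `(x)_k = x(x+1)⋯(x+k-1)`. -/
def rf (x : ℚ) (k : ℕ) : ℚ := ∏ i ∈ Finset.range k, (x + i)

lemma rf_succ (x : ℚ) (k : ℕ) : rf x (k+1) = rf x k * (x + k) := Finset.prod_range_succ _ _

lemma rf_fact (p q : ℕ) : rf ((p:ℚ)+1) q = ((p+q).factorial : ℚ) / (p.factorial : ℚ) := by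
  induction q with
  | zero =>
      have h1 : ((p.factorial : ℚ)) ≠ 0 := by exact_mod_cast p.factorial_ne_zero
      simp [rf, h1]
  | succ q ih =>
      rw [rf_succ, ih]
      have h1 : ((p.factorial : ℚ)) ≠ 0 := by exact_mod_cast p.factorial_ne_zero
      rw [show p + (q+1) = (p+q)+1 by ring, Nat.factorial_succ]
      push_cast
      field_simp
      ring

lemma rf_zero_of (t k : ℕ) (h : t < k) : rf (-(t:ℚ)) k = 0 :=
  Finset.prod_eq_zero (Finset.mem_range.2 h) (by simp)

lemma cb_neg (a : ℕ) (b : ℤ) (h : b < 0) : cb a b = 0 := by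
  unfold cb; rw [if_neg (by omega)]

lemma cb_nat (a B : ℕ) : cb a (B:ℤ) = (Nat.choose a B : ℚ) := by
  unfold cb; rw [if_pos (by positivity)]; simp

lemma cb_nat_fact (a B : ℕ) (h : B ≤ a) :
    cb a (B:ℤ) = (a.factorial : ℚ) / ((B.factorial : ℚ) * ((a-B).factorial : ℚ)) := by
  rw [cb_nat, Nat.cast_choose ℚ h]

lemma cb_gt (a B : ℕ) (h : a < B) : cb a (B:ℤ) = 0 := by
  rw [cb_nat, Nat.choose_eq_zero_of_lt h]; simp

/-- cast helper -/
lemma natcast_eq_of_int (t : ℕ) (z : ℤ) (h : (t : ℤ) = z) : ((t : ℕ) : ℚ) = (z : ℚ) := by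
  exact_mod_cast congrArg (fun x : ℤ => (x : ℚ)) h

lemma entry_ne (n m I J : ℕ) (hI : I < n) (hJ : J < n) :
    (1 / 2 : ℚ) * cb (n + m - (I + 1)) ((m : ℤ) + (I + 1) - (J + 1)) +
      cb (n + m - (I + 1)) ((m : ℤ) + I - (J + 1)) =
    (((n + m - I - 1).factorial : ℚ) /
        (((m + I).factorial : ℚ) * ((2 * n - 2 * I - 1).factorial : ℚ))) *
      (rf ((n : ℚ) + 2 + ((J : ℚ) + 1) - 2 * ((I : ℚ) + 1)) (n - (J + 1)) *
        rf (((I : ℚ) + 1) + (m : ℚ) + 1 - ((J : ℚ) + 1)) J *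
        ((m : ℚ) + ((n : ℚ) + 1 - ((J : ℚ) + 1)) / 2)) := by
  have ha : n + m - (I + 1) = n + m - I - 1 := by omega
  rw [ha]
  set a := n + m - I - 1 with hadef
  clear_value a
  by_cases hb : m + I < J
  · have t1 : ((m : ℤ) + (I + 1) - (J + 1)) < 0 := by omega
    have t2 : ((m : ℤ) + I - (J + 1)) < 0 := by omega
    rw [cb_neg _ _ t1, cb_neg _ _ t2]
    have h2 : (((I : ℚ) + 1) + (m : ℚ) + 1 - ((J : ℚ) + 1)) = -(((J - (m + I + 1) : ℕ)) : ℚ) := by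
      rw [natcast_eq_of_int (J - (m + I + 1)) ((J : ℤ) - m - I - 1) (by omega)]
      push_cast; ring
    rw [h2, rf_zero_of _ _ (by omega)]
    ring
  · push_neg at hb
    set B := m + I - J with hBdef
    clear_value B
    have hB1 : (m : ℤ) + (I + 1) - (J + 1) = (B : ℤ) := by omega
    have hB2 : (m : ℤ) + I - (J + 1) = (B : ℤ) - 1 := by omega
    have hrf2 : rf (((I : ℚ) + 1) + (m : ℚ) + 1 - ((J : ℚ) + 1)) J
        = (((m + I)).factorial : ℚ) / (B.factorial : ℚ) := by
      have e : (((I : ℚ) + 1) + (m : ℚ) + 1 - ((J : ℚ) + 1)) = ((B : ℚ)) + 1 := by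
        rw [show ((B : ℚ)) = (((B : ℕ)) : ℚ) from rfl,
          natcast_eq_of_int B ((m : ℤ) + I - J) (by omega)]
        push_cast; ring
      rw [e, rf_fact, show B + J = m + I by omega]
    rw [hB1, hB2, hrf2]
    have hfa : ((a.factorial : ℚ)) ≠ 0 := by exact_mod_cast a.factorial_ne_zero
    have hfB : ((B.factorial : ℚ)) ≠ 0 := by exact_mod_cast B.factorial_ne_zero
    have hfmI : (((m+I).factorial : ℚ)) ≠ 0 := by exact_mod_cast (m+I).factorial_ne_zero
    have hf2n : (((2*n-2*I-1).factorial : ℚ)) ≠ 0 := by exact_mod_cast (2*n-2*I-1).factorial_ne_zero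
    by_cases h1 : B ≤ a
    · -- main case
      have hrf1 : rf ((n : ℚ) + 2 + ((J : ℚ) + 1) - 2 * ((I : ℚ) + 1)) (n - (J + 1))
          = ((2 * n - 2 * I - 1).factorial : ℚ) / ((n + J - 2 * I).factorial : ℚ) := by
        have e : ((n : ℚ) + 2 + ((J : ℚ) + 1) - 2 * ((I : ℚ) + 1)) = ((n + J - 2 * I : ℕ) : ℚ) + 1 := by
          rw [natcast_eq_of_int (n + J - 2 * I) ((n : ℤ) + J - 2 * I) (by omega)]
          push_cast; ring
        rw [e, rf_fact, show n + J - 2 * I + (n - (J + 1)) = 2 * n - 2 * I - 1 by omega]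
      rw [hrf1]
      have hc1 : cb a (B : ℤ) = (a.factorial : ℚ) / ((B.factorial : ℚ) * ((a - B).factorial : ℚ)) :=
        cb_nat_fact a B h1
      have hfaB : (((a - B).factorial : ℚ)) ≠ 0 := by exact_mod_cast (a-B).factorial_ne_zero
      have hfnJ : (((n+J-2*I).factorial : ℚ)) ≠ 0 := by exact_mod_cast (n+J-2*I).factorial_ne_zero
      have hnJ : n + J - 2 * I = a + 1 - B := by omega
      have hfac : (((a + 1 - B).factorial : ℚ)) = ((a + 1 - B : ℕ) : ℚ) * ((a - B).factorial : ℚ) := by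
        rw [show a + 1 - B = (a - B) + 1 by omega, Nat.factorial_succ]
        push_cast [natcast_eq_of_int (a - B) ((a : ℤ) - B) (by omega),
          natcast_eq_of_int (a + 1 - B) ((a : ℤ) + 1 - B) (by omega)]
        ring
      have hfactor : ((m : ℚ) + ((n : ℚ) + 1 - ((J : ℚ) + 1)) / 2) = ((a + 1 + B : ℕ) : ℚ) / 2 := by
        rw [natcast_eq_of_int (a + 1 + B) ((n : ℤ) + 2 * m - J) (by omega)]
        push_cast; ring
      rw [hc1, hfactor, hnJ, hfac]
      have hxne : ((a + 1 - B : ℕ) : ℚ) ≠ 0 := by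
        rw [natcast_eq_of_int (a + 1 - B) ((a : ℤ) + 1 - B) (by omega)]
        intro h; rw [show ((((a : ℤ) + 1 - B) : ℤ) : ℚ) = ((a : ℚ)) + 1 - B by push_cast; ring] at h
        have : (B : ℚ) = (a : ℚ) + 1 := by linarith
        have : B = a + 1 := by exact_mod_cast this
        omega
      rcases Nat.eq_zero_or_pos B with hB0 | hB0
      · subst hB0
        rw [cb_neg _ _ (by omega)]
        simp only [Nat.sub_zero, Nat.factorial_zero, Nat.cast_one] at *
        have e3 : ((a + 1 + 0 : ℕ) : ℚ) = ((a + 1 - 0 : ℕ) : ℚ) := by norm_num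
        rw [e3]
        field_simp
        ring
      · have hc2 : cb a ((B : ℤ) - 1) = (a.factorial : ℚ) / (((B-1).factorial : ℚ) * ((a - (B-1)).factorial : ℚ)) := by
          rw [show (B : ℤ) - 1 = ((B - 1 : ℕ) : ℤ) by omega]
          exact cb_nat_fact a (B-1) (by omega)
        rw [hc2]
        have hfB1 : (((B-1).factorial : ℚ)) ≠ 0 := by exact_mod_cast (B-1).factorial_ne_zero
        have e1 : ((B.factorial : ℚ)) = (B : ℚ) * ((B-1).factorial : ℚ) := by
          rw [show B = (B - 1) + 1 by omega, Nat.factorial_succ]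
          push_cast [natcast_eq_of_int (B - 1) ((B : ℤ) - 1) (by omega)]
          ring
        have e2 : (((a - (B-1)).factorial : ℚ)) = ((a + 1 - B : ℕ) : ℚ) * ((a - B).factorial : ℚ) := by
          rw [show a - (B-1) = (a - B) + 1 by omega, Nat.factorial_succ]
          push_cast [natcast_eq_of_int (a - B) ((a : ℤ) - B) (by omega),
            natcast_eq_of_int (a + 1 - B) ((a : ℤ) + 1 - B) (by omega)]
          ring
        have e3 : ((a + 1 + B : ℕ) : ℚ) = ((a + 1 - B : ℕ) : ℚ) + 2 * B := by
          rw [natcast_eq_of_int (a + 1 + B) ((a : ℤ) + 1 + B) (by omega),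
            natcast_eq_of_int (a + 1 - B) ((a : ℤ) + 1 - B) (by omega)]
          push_cast; ring
        rw [e2, e1, e3]
        have hBne : (B : ℚ) ≠ 0 := Nat.cast_ne_zero.2 (by omega)
        field_simp
    · push_neg at h1
      by_cases h2 : B = a + 1
      · -- boundary: second binomial is choose a a = 1
        have hJI : n + J = 2 * I := by omega
        rw [cb_gt a B (by omega), show (B : ℤ) - 1 = ((a : ℕ) : ℤ) by omega, cb_nat,
          Nat.choose_self]
        have hrf1 : rf ((n : ℚ) + 2 + ((J : ℚ) + 1) - 2 * ((I : ℚ) + 1)) (n - (J + 1))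
            = (((n - J - 1).factorial : ℚ)) := by
          have e : ((n : ℚ) + 2 + ((J : ℚ) + 1) - 2 * ((I : ℚ) + 1)) = ((0 : ℕ) : ℚ) + 1 := by
            have hIc : (I : ℚ) = ((n : ℚ) + J) / 2 := by
              have := natcast_eq_of_int (n + J) (2 * I) (by omega)
              push_cast at this; linarith
            rw [hIc]; push_cast; ring
          rw [e, rf_fact, show 0 + (n - (J+1)) = n - J - 1 by omega]
          simp
        rw [hrf1]
        have hfactor : ((m : ℚ) + ((n : ℚ) + 1 - ((J : ℚ) + 1)) / 2) = ((a : ℚ) + 1) := by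
          have h1' : ((a : ℕ) : ℚ) = (n : ℚ) + m - I - 1 := by
            rw [natcast_eq_of_int a ((n : ℤ) + m - I - 1) (by omega)]; push_cast; ring
          have h2' : (J : ℚ) = 2 * I - n := by
            have := natcast_eq_of_int (n + J) (2 * I) (by omega)
            push_cast at this; linarith
          rw [h1', h2']; ring
        rw [hfactor]
        have e1 : ((B.factorial : ℚ)) = ((a : ℚ) + 1) * (a.factorial : ℚ) := by
          rw [h2, Nat.factorial_succ]; push_cast; ring
        have e2 : (2 * n - 2 * I - 1) = n - J - 1 := by omega
        rw [e1, e2]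
        have hane : ((a : ℚ)) + 1 ≠ 0 := by positivity
        have hfn : (((n-J-1).factorial : ℚ)) ≠ 0 := by exact_mod_cast (n-J-1).factorial_ne_zero
        field_simp
        ring
      · -- B ≥ a + 2 : everything vanishes
        rw [cb_gt a B (by omega), show (B : ℤ) - 1 = ((B - 1 : ℕ) : ℤ) by omega,
          cb_gt a (B-1) (by omega)]
        have e : ((n : ℚ) + 2 + ((J : ℚ) + 1) - 2 * ((I : ℚ) + 1)) = -(((2 * I - n - J - 1 : ℕ)) : ℚ) := by
          rw [natcast_eq_of_int (2 * I - n - J - 1) (2 * (I : ℤ) - n - J - 1) (by omega)]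
          push_cast; ring
        rw [e, rf_zero_of _ _ (by omega)]
        ring

lemma entry_s (n m s J : ℕ) (hs : s < n) (hJ : J < n) (hsm : 1 ≤ s + m) :
    cb (n + m - s) ((m : ℤ) + s - (J + 1)) =
    (((n + m - s).factorial : ℚ) /
        (((s + m - 1).factorial : ℚ) * ((2 * n - 2 * s).factorial : ℚ))) *
      (rf ((n : ℚ) + 1 + ((J : ℚ) + 1) - 2 * (s : ℚ)) (n - (J + 1)) *
        rf ((s : ℚ) + (m : ℚ) + 1 - ((J : ℚ) + 1)) J) := by
  set a := n + m - s with hadef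
  clear_value a
  by_cases hb : m + s < J + 1
  · rw [cb_neg _ _ (by omega)]
    have h2 : ((s : ℚ) + (m : ℚ) + 1 - ((J : ℚ) + 1)) = -(((J - (m + s) : ℕ)) : ℚ) := by
      rw [natcast_eq_of_int (J - (m + s)) ((J : ℤ) - m - s) (by omega)]
      push_cast; ring
    rw [h2, rf_zero_of _ _ (by omega)]
    ring
  · push_neg at hb
    set B := m + s - J - 1 with hBdef
    clear_value B
    have hB1 : (m : ℤ) + s - (J + 1) = (B : ℤ) := by omega
    rw [hB1]
    have hrf2 : rf ((s : ℚ) + (m : ℚ) + 1 - ((J : ℚ) + 1)) J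
        = (((s + m - 1)).factorial : ℚ) / (B.factorial : ℚ) := by
      have e : ((s : ℚ) + (m : ℚ) + 1 - ((J : ℚ) + 1)) = ((B : ℚ)) + 1 := by
        rw [show ((B : ℚ)) = (((B : ℕ)) : ℚ) from rfl,
          natcast_eq_of_int B ((m : ℤ) + s - J - 1) (by omega)]
        push_cast; ring
      rw [e, rf_fact, show B + J = s + m - 1 by omega]
    rw [hrf2]
    have hfa : ((a.factorial : ℚ)) ≠ 0 := by exact_mod_cast a.factorial_ne_zero
    have hfB : ((B.factorial : ℚ)) ≠ 0 := by exact_mod_cast B.factorial_ne_zero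
    have hfsm : (((s + m - 1).factorial : ℚ)) ≠ 0 := by exact_mod_cast (s+m-1).factorial_ne_zero
    have hf2n : (((2*n-2*s).factorial : ℚ)) ≠ 0 := by exact_mod_cast (2*n-2*s).factorial_ne_zero
    by_cases h1 : B ≤ a
    · have hrf1 : rf ((n : ℚ) + 1 + ((J : ℚ) + 1) - 2 * (s : ℚ)) (n - (J + 1))
          = ((2 * n - 2 * s).factorial : ℚ) / ((n + J + 1 - 2 * s).factorial : ℚ) := by
        have e : ((n : ℚ) + 1 + ((J : ℚ) + 1) - 2 * (s : ℚ)) = ((n + J + 1 - 2 * s : ℕ) : ℚ) + 1 := by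
          rw [natcast_eq_of_int (n + J + 1 - 2 * s) ((n : ℤ) + J + 1 - 2 * s) (by omega)]
          push_cast; ring
        rw [e, rf_fact, show n + J + 1 - 2 * s + (n - (J + 1)) = 2 * n - 2 * s by omega]
      rw [hrf1, cb_nat_fact a B h1, show a - B = n + J + 1 - 2 * s by omega]
      have hfnJ : (((n+J+1-2*s).factorial : ℚ)) ≠ 0 := by exact_mod_cast (n+J+1-2*s).factorial_ne_zero
      field_simp
    · push_neg at h1
      rw [cb_gt a B h1]
      have e : ((n : ℚ) + 1 + ((J : ℚ) + 1) - 2 * (s : ℚ)) = -(((2 * s - n - J - 2 : ℕ)) : ℚ) := by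
        rw [natcast_eq_of_int (2 * s - n - J - 2) (2 * (s : ℤ) - n - J - 2) (by omega)]
        push_cast; ring
      rw [e, rf_zero_of _ _ (by omega)]
      ring

lemma prod_w (n m : ℕ) :
    (∏ i : Fin n, (((n + m - i.1 - 1).factorial : ℚ) /
        (((m + i.1).factorial : ℚ) * ((2 * n - 2 * i.1 - 1).factorial : ℚ)))) =
      1 / ∏ i : Fin n, ((2 * n - 2 * i.1 - 1).factorial : ℚ) := by
  rw [Fin.prod_univ_eq_prod_range
      (fun i => (((n + m - i - 1).factorial : ℚ) /
        (((m + i).factorial : ℚ) * ((2 * n - 2 * i - 1).factorial : ℚ)))),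
    Fin.prod_univ_eq_prod_range (fun i => ((2 * n - 2 * i - 1).factorial : ℚ))]
  rw [Finset.prod_div_distrib, Finset.prod_mul_distrib]
  have hxy : (∏ i ∈ Finset.range n, (((n + m - i - 1).factorial : ℚ)))
      = ∏ i ∈ Finset.range n, (((m + i).factorial : ℚ)) := by
    rw [← Finset.prod_range_reflect (fun i => ((m + i).factorial : ℚ)) n]
    apply Finset.prod_congr rfl
    intro i hi
    have : n + m - i - 1 = m + (n - 1 - i) := by
      have := Finset.mem_range.1 hi; omega
    rw [this]
  rw [hxy]
  have h1 : (∏ i ∈ Finset.range n, (((m + i).factorial : ℚ))) ≠ 0 :=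
    Finset.prod_ne_zero_iff.2 fun i _ => by exact_mod_cast (m + i).factorial_ne_zero
  have h2 : (∏ i ∈ Finset.range n, (((2 * n - 2 * i - 1).factorial : ℚ))) ≠ 0 :=
    Finset.prod_ne_zero_iff.2 fun i _ => by exact_mod_cast (2 * n - 2 * i - 1).factorial_ne_zero
  field_simp

lemma icc_prod (n : ℕ) :
    (∏ i ∈ Finset.Icc 1 n, (Nat.factorial (2 * n + 1 - 2 * i) : ℚ))
      = ∏ i : Fin n, ((2 * n - 2 * i.1 - 1).factorial : ℚ) := by
  rw [Fin.prod_univ_eq_prod_range (fun i => ((2 * n - 2 * i - 1).factorial : ℚ)),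
    ← Finset.Ico_add_one_right_eq_Icc, Finset.prod_Ico_eq_prod_range]
  apply Finset.prod_congr (by norm_num)
  intro i _
  congr 2
  omega

lemma vs_eq (n m s : ℕ) (hs : s < n) (hsm1 : 1 ≤ s + m) :
    ((n + m - s).factorial : ℚ) /
        (((s + m - 1).factorial : ℚ) * ((2 * n - 2 * s).factorial : ℚ))
    = (((n + m - s : ℕ) : ℚ) * ((s + m : ℕ) : ℚ) / ((2 * n - 2 * s : ℕ) : ℚ)) *
      (((n + m - s - 1).factorial : ℚ) /
        (((m + s).factorial : ℚ) * ((2 * n - 2 * s - 1).factorial : ℚ))) := by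
  have e1 : ((n + m - s).factorial : ℚ)
      = ((n + m - s : ℕ) : ℚ) * ((n + m - s - 1).factorial : ℚ) := by
    exact_mod_cast (Nat.mul_factorial_pred (show n + m - s ≠ 0 by omega)).symm
  have e2 : ((m + s).factorial : ℚ)
      = ((s + m : ℕ) : ℚ) * ((s + m - 1).factorial : ℚ) := by
    rw [show m + s = s + m by omega]
    exact_mod_cast (Nat.mul_factorial_pred (show s + m ≠ 0 by omega)).symm
  have e3 : ((2 * n - 2 * s).factorial : ℚ)
      = ((2 * n - 2 * s : ℕ) : ℚ) * ((2 * n - 2 * s - 1).factorial : ℚ) := by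
    exact_mod_cast (Nat.mul_factorial_pred (show 2 * n - 2 * s ≠ 0 by omega)).symm
  rw [e1, e2, e3]
  have h1 : (((s + m - 1).factorial : ℚ)) ≠ 0 := by
    exact_mod_cast (s + m - 1).factorial_ne_zero
  have h2 : (((2 * n - 2 * s - 1).factorial : ℚ)) ≠ 0 := by
    exact_mod_cast (2 * n - 2 * s - 1).factorial_ne_zero
  have h3 : ((2 * n - 2 * s : ℕ) : ℚ) ≠ 0 := Nat.cast_ne_zero.2 (by omega)
  have h4 : ((s + m : ℕ) : ℚ) ≠ 0 := Nat.cast_ne_zero.2 (by omega)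
  have h5 : (((n + m - s - 1).factorial : ℚ)) ≠ 0 := by
    exact_mod_cast (n + m - s - 1).factorial_ne_zero
  rw [div_mul_div_comm, div_eq_div_iff (by positivity) (by positivity)]
  ring

lemma prod_v (n m s : ℕ) (hs : s < n) (hsm1 : 1 ≤ s + m) :
    (∏ i : Fin n, (if i.1 = s then
        ((n + m - s).factorial : ℚ) /
          (((s + m - 1).factorial : ℚ) * ((2 * n - 2 * s).factorial : ℚ))
      else ((n + m - i.1 - 1).factorial : ℚ) /
          (((m + i.1).factorial : ℚ) * ((2 * n - 2 * i.1 - 1).factorial : ℚ))))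
    = ((n + m - s : ℕ) : ℚ) * ((s + m : ℕ) : ℚ) /
        (((2 * n - 2 * s : ℕ) : ℚ) *
          ∏ i ∈ Finset.Icc 1 n, (Nat.factorial (2 * n + 1 - 2 * i) : ℚ)) := by
  have hvw : ∀ i : Fin n, (if i.1 = s then
        ((n + m - s).factorial : ℚ) /
          (((s + m - 1).factorial : ℚ) * ((2 * n - 2 * s).factorial : ℚ))
      else ((n + m - i.1 - 1).factorial : ℚ) /
          (((m + i.1).factorial : ℚ) * ((2 * n - 2 * i.1 - 1).factorial : ℚ))) =
      (if i = (⟨s, hs⟩ : Fin n) then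
          (((n + m - s : ℕ) : ℚ) * ((s + m : ℕ) : ℚ) / ((2 * n - 2 * s : ℕ) : ℚ)) else 1) *
        (((n + m - i.1 - 1).factorial : ℚ) /
          (((m + i.1).factorial : ℚ) * ((2 * n - 2 * i.1 - 1).factorial : ℚ))) := by
    intro i
    by_cases hi : i.1 = s
    · have hieq : i = (⟨s, hs⟩ : Fin n) := Fin.ext hi
      rw [if_pos hi, if_pos hieq, hi]
      exact vs_eq n m s hs hsm1
    · have hieq : i ≠ (⟨s, hs⟩ : Fin n) := fun h => hi (by rw [h])
      rw [if_neg hi, if_neg hieq, one_mul]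
  rw [Finset.prod_congr rfl fun i _ => hvw i, Finset.prod_mul_distrib, prod_w n m,
    Finset.prod_ite_eq' Finset.univ (⟨s, hs⟩ : Fin n)
      (fun _ => (((n + m - s : ℕ) : ℚ) * ((s + m : ℕ) : ℚ) / ((2 * n - 2 * s : ℕ) : ℚ))),
    icc_prod n]
  have h2 : (∏ i : Fin n, (((2 * n - 2 * i.1 - 1).factorial : ℚ))) ≠ 0 :=
    Finset.prod_ne_zero_iff.2 fun i _ => by
      exact_mod_cast (2 * n - 2 * i.1 - 1).factorial_ne_zero
  have h3 : ((2 * n - 2 * s : ℕ) : ℚ) ≠ 0 := Nat.cast_ne_zero.2 (by omega)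
  simp only [Finset.mem_univ, if_true]
  rw [div_mul_div_comm, mul_one]

/-- Lemma relating the lattice-path determinant to the polynomial
determinant: `det A = [(n+m-s)(s+m)/((2n-2s)·∏_{i=1}^{n}(2n+1-2i)!)]·det B`,
where `A_{ij} = (1/2)·C(n+m-i, m+i-j) + C(n+m-i, m+i-1-j)` for `i ≠ s+1`,
`A_{s+1,j} = C(n+m-s, m+s-j)`, and `B` is as in the paper. -/
theorem det_A_eq_factor_det_B (n m s : ℕ) (hn : 1 ≤ n) (hs : s < n) :
    Matrix.det (Matrix.of fun i j : Fin n =>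
        if i.1 = s then cb (n + m - s) ((m : ℤ) + s - (j.1 + 1))
        else (1 / 2 : ℚ) * cb (n + m - (i.1 + 1)) ((m : ℤ) + (i.1 + 1) - (j.1 + 1)) +
          cb (n + m - (i.1 + 1)) ((m : ℤ) + i.1 - (j.1 + 1))) =
      (((n + m - s : ℕ) : ℚ) * ((s + m : ℕ) : ℚ) /
          (((2 * n - 2 * s : ℕ) : ℚ) *
            ∏ i ∈ Finset.Icc 1 n, (Nat.factorial (2 * n + 1 - 2 * i) : ℚ))) *
        Matrix.det (Matrix.of fun i j : Fin n =>
          if i.1 = s then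
            rf ((n : ℚ) + 1 + ((j.1 : ℚ) + 1) - 2 * (s : ℚ)) (n - (j.1 + 1)) *
              rf ((s : ℚ) + (m : ℚ) + 1 - ((j.1 : ℚ) + 1)) j.1
          else
            rf ((n : ℚ) + 2 + ((j.1 : ℚ) + 1) - 2 * ((i.1 : ℚ) + 1)) (n - (j.1 + 1)) *
              rf (((i.1 : ℚ) + 1) + (m : ℚ) + 1 - ((j.1 : ℚ) + 1)) j.1 *
              ((m : ℚ) + ((n : ℚ) + 1 - ((j.1 : ℚ) + 1)) / 2)) := by
  by_cases hsm0 : s + m = 0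
  · -- degenerate case : row `s` of `A` vanishes and so does the scalar factor
    have hs0 : s = 0 := by omega
    have hm0 : m = 0 := by omega
    subst hs0; subst hm0
    have hrow : ∀ j : Fin n, (Matrix.of fun i j : Fin n =>
        if i.1 = 0 then cb (n + 0 - 0) ((0 : ℕ) + (0 : ℕ) - ((j.1 : ℤ) + 1))
        else (1 / 2 : ℚ) * cb (n + 0 - (i.1 + 1)) (((0:ℕ) : ℤ) + (i.1 + 1) - (j.1 + 1)) +
          cb (n + 0 - (i.1 + 1)) (((0:ℕ) : ℤ) + i.1 - (j.1 + 1))) ⟨0, by omega⟩ j = 0 := by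
      intro j
      simp only [Matrix.of_apply]
      norm_num
      apply cb_neg
      omega
    rw [Matrix.det_eq_zero_of_row_eq_zero ⟨0, by omega⟩ hrow]
    norm_num
  · have hsm1 : 1 ≤ s + m := by omega
    have hAB : (Matrix.of fun i j : Fin n =>
        if i.1 = s then cb (n + m - s) ((m : ℤ) + s - (j.1 + 1))
        else (1 / 2 : ℚ) * cb (n + m - (i.1 + 1)) ((m : ℤ) + (i.1 + 1) - (j.1 + 1)) +
          cb (n + m - (i.1 + 1)) ((m : ℤ) + i.1 - (j.1 + 1)))
        = Matrix.of fun i j : Fin n =>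
          (if i.1 = s then
              ((n + m - s).factorial : ℚ) /
                (((s + m - 1).factorial : ℚ) * ((2 * n - 2 * s).factorial : ℚ))
            else ((n + m - i.1 - 1).factorial : ℚ) /
                (((m + i.1).factorial : ℚ) * ((2 * n - 2 * i.1 - 1).factorial : ℚ))) *
          (Matrix.of fun i j : Fin n =>
            if i.1 = s then
              rf ((n : ℚ) + 1 + ((j.1 : ℚ) + 1) - 2 * (s : ℚ)) (n - (j.1 + 1)) *
                rf ((s : ℚ) + (m : ℚ) + 1 - ((j.1 : ℚ) + 1)) j.1
            else
              rf ((n : ℚ) + 2 + ((j.1 : ℚ) + 1) - 2 * ((i.1 : ℚ) + 1)) (n - (j.1 + 1)) *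
                rf (((i.1 : ℚ) + 1) + (m : ℚ) + 1 - ((j.1 : ℚ) + 1)) j.1 *
                ((m : ℚ) + ((n : ℚ) + 1 - ((j.1 : ℚ) + 1)) / 2)) i j := by
      ext i j
      simp only [Matrix.of_apply]
      by_cases hi : i.1 = s
      · rw [if_pos hi, if_pos hi, if_pos hi]
        exact entry_s n m s j.1 hs j.2 hsm1
      · rw [if_neg hi, if_neg hi, if_neg hi]
        exact entry_ne n m i.1 j.1 i.2 j.2
    rw [hAB, Matrix.det_mul_column]
    congr 1
    exact prod_v n m s hs hsm1
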